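/- Let P and Q be orthogonal projectors on ℂ^d (Hermitian idempotent d×d complex matrices) and let Γ be a nonzero complex d×d matrix. Then the Kronecker product P ⊗ Q commutes with the rank-one matrix vec(Γ)·vec(Γ)ᴴ if and only if P·Γ·Qᵀ = Γ or P·Γ·Qᵀ = 0. -/

import Mathlib

open Matrix
open scoped Kronecker

/-- Vectorization of a matrix: `vec C (i,j) = C i j`. -/
def vec {m n : ℕ} (C : Matrix (Fin m) (Fin n) ℂ) : Fin m × Fin n → ℂ :=
  fun p => C p.1 p.2

lemma vec_eq_iff {m n : ℕ} (A B : Matrix (Fin m) (Fin n) ℂ) : _root_.vec A = _root_.vec B ↔ A = B := by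
  constructor
  · intro h; ext i j; exact congrFun h (i, j)
  · rintro rfl; rfl

lemma mul_vecMulVec {m : Type*} [Fintype m] (M : Matrix m m ℂ) (a b : m → ℂ) :
    M * vecMulVec a b = vecMulVec (M *ᵥ a) b := by
  ext i j
  simp [mul_apply, vecMulVec_apply, mulVec, dotProduct, Finset.sum_mul, mul_assoc]

lemma vecMulVec_mul {m : Type*} [Fintype m] (M : Matrix m m ℂ) (a b : m → ℂ) :
    vecMulVec a b * M = vecMulVec a (b ᵥ* M) := by
  ext i j
  simp [mul_apply, vecMulVec_apply, vecMul, dotProduct, Finset.mul_sum, mul_assoc]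

lemma kron_mulVec_vec {d : ℕ} (P Q Γ : Matrix (Fin d) (Fin d) ℂ) :
    (P ⊗ₖ Q) *ᵥ _root_.vec Γ = _root_.vec (P * Γ * Qᵀ) := by
  ext ⟨i, j⟩
  simp only [mulVec, dotProduct, _root_.vec, kroneckerMap_apply, Fintype.sum_prod_type,
    mul_apply, transpose_apply, Finset.sum_mul, Finset.mul_sum]
  rw [Finset.sum_comm]
  apply Finset.sum_congr rfl; intro l _
  apply Finset.sum_congr rfl; intro k _
  ring

lemma kron_conjTranspose {d : ℕ} (P Q : Matrix (Fin d) (Fin d) ℂ)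
    (hP1 : Pᴴ = P) (hQ1 : Qᴴ = Q) : (P ⊗ₖ Q)ᴴ = P ⊗ₖ Q := by
  ext ⟨i, j⟩ ⟨k, l⟩
  have hp : star (P k i) = P i k := congrFun (congrFun hP1 i) k
  have hq : star (Q l j) = Q j l := congrFun (congrFun hQ1 j) l
  simp [conjTranspose_apply, kroneckerMap_apply, hp, hq]

/-- For orthogonal projectors `P`, `Q` and a nonzero `Γ`, the product property `P ⊗ Q`
commutes with the whole-system rank-one property `vec(Γ)·vec(Γ)ᴴ` iff
`P·Γ·Qᵀ = Γ` or `P·Γ·Qᵀ = 0`. -/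
theorem kronecker_commutes_with_outer_iff (d : ℕ) (P Q Γ : Matrix (Fin d) (Fin d) ℂ)
    (hP1 : Pᴴ = P) (hP2 : P * P = P) (hQ1 : Qᴴ = Q) (hQ2 : Q * Q = Q)
    (hΓ : Γ ≠ 0) :
    Commute (P ⊗ₖ Q) (vecMulVec (_root_.vec Γ) (star (_root_.vec Γ))) ↔
      P * Γ * Qᵀ = Γ ∨ P * Γ * Qᵀ = 0 := by
  set K := P ⊗ₖ Q with hK
  set v := _root_.vec Γ with hv
  set w := _root_.vec (P * Γ * Qᵀ) with hw
  have hKH : Kᴴ = K := kron_conjTranspose P Q hP1 hQ1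
  have hKv : K *ᵥ v = w := kron_mulVec_vec P Q Γ
  have hKK : K * K = K := by
    have h := Matrix.mul_kronecker_mul P P Q Q
    rw [hP2, hQ2] at h
    exact h.symm
  have hstar : star v ᵥ* K = star w := by
    rw [← hKv, star_mulVec, hKH]
  have hcomm : Commute K (vecMulVec v (star v)) ↔
      vecMulVec w (star v) = vecMulVec v (star w) := by
    unfold Commute SemiconjBy
    rw [_root_.mul_vecMulVec, _root_.vecMulVec_mul, hKv, hstar]
  rw [hcomm, ← vec_eq_iff (P * Γ * Qᵀ) Γ, ← hv, ← hw]
  have hv0 : v ≠ 0 := by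
    intro h
    apply hΓ
    rw [← vec_eq_iff]
    exact h.trans (funext fun p => by simp [_root_.vec])
  constructor
  · intro h
    -- entrywise: w i * star (v j) = v i * star (w j)
    have hent : ∀ i j, w i * star (v j) = v i * star (w j) := by
      intro i j
      have := congrFun (congrFun h i) j
      simpa [vecMulVec_apply] using this
    set n : ℂ := dotProduct (star v) v with hn
    have hn0 : n ≠ 0 := by
      intro h0
      apply hv0
      have hsum : (↑(∑ j, Complex.normSq (v j)) : ℂ) = 0 := by
        rw [← h0, hn]
        simp only [dotProduct, Complex.ofReal_sum, Complex.normSq_eq_conj_mul_self]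
        rfl
      have hsum' : (∑ j, Complex.normSq (v j)) = 0 := by exact_mod_cast hsum
      funext j
      have hnn : ∀ j ∈ Finset.univ, 0 ≤ Complex.normSq (v j) := fun j _ => Complex.normSq_nonneg _
      have := (Finset.sum_eq_zero_iff_of_nonneg hnn).mp hsum' j (Finset.mem_univ j)
      exact Complex.normSq_eq_zero.mp this
    set s : ℂ := dotProduct (star w) v with hs
    have hscale : ∀ i, w i * n = v i * s := by
      intro i
      simp only [hn, hs, dotProduct, Finset.mul_sum]
      apply Finset.sum_congr rfl; intro j _
      calc w i * (star (v j) * v j) = (w i * star (v j)) * v j := by ring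
        _ = (v i * star (w j)) * v j := by rw [hent i j]
        _ = v i * (star (w j) * v j) := by ring
    have hwc : w = (s / n) • v := by
      funext i
      have := hscale i
      rw [Pi.smul_apply, smul_eq_mul]
      field_simp
      linear_combination this
    -- K *ᵥ w = w
    have hKw : K *ᵥ w = w := by
      rw [← hKv, mulVec_mulVec, hKK]
    have hcw : (s / n) • w = w := by
      calc (s / n) • w = (s / n) • (K *ᵥ v) := by rw [hKv]
        _ = K *ᵥ ((s / n) • v) := by rw [mulVec_smul]
        _ = K *ᵥ w := by rw [← hwc]
        _ = w := hKw
    by_cases hc : s / n = 1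
    · left
      rw [hwc, hc, one_smul]
    · right
      have hz : (s / n - 1) • w = 0 := by
        rw [sub_smul, hcw, one_smul, sub_self]
      have h1 : (s / n - 1) ≠ 0 := sub_ne_zero.mpr hc
      ext i j
      have h2 := congrFun hz (i, j)
      simp only [Pi.smul_apply, smul_eq_mul, Pi.zero_apply] at h2
      have h3 := (mul_eq_zero.mp h2).resolve_left h1
      simpa [hw, _root_.vec] using h3
  · rintro (h | h)
    · rw [h]
    · have hw0 : w = 0 := by
        rw [hw, h]
        funext p
        simp [_root_.vec]
      rw [hw0]
      ext i j
      simp [vecMulVec_apply]
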